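/- Let Φ be a Schramm sequence with Φ_k(x) = ∑_{j=1}^k φ_j(x) strictly increasing, and 1 ≤ q_n ↑ q ≤ ∞, 2 ≤ δ_n ↑ ∞. If limsup_{n→∞} max_{1≤k≤δ_n} k^{1/q_n} Φ_k^{−1}(1) = ∞, then there exists a function f on [0,1] of Φ-bounded variation with f ∉ BV^{(q_n↑q)}. -/

import Mathlib

open Finset Filter

/-- Auxiliary: pairwise disjoint dense sets of dyadic rationals with odd numerator,
tagged by the 2-adic valuation of the denominator exponent. -/
private def Dset (i : ℕ) : Set ℝ :=
  {x | ∃ c : ℤ, Odd c ∧ ∃ r : ℕ, x = (c : ℝ) / 2 ^ (2 ^ i * (2 * r + 1))}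

private lemma not_irrational_of_mem_Dset {i : ℕ} {x : ℝ} (hx : x ∈ Dset i) :
    ¬ Irrational x := by
  obtain ⟨c, -, r, rfl⟩ := hx
  intro h
  exact h ⟨(c : ℚ) / 2 ^ (2 ^ i * (2 * r + 1)), by push_cast; ring⟩

private lemma two_pow_mul_odd_inj {i r l s : ℕ}
    (h : 2 ^ i * (2 * r + 1) = 2 ^ l * (2 * s + 1)) : i = l := by
  have h1 : (2 ^ i * (2 * r + 1)).factorization 2 = i := by
    rw [Nat.factorization_mul (pow_ne_zero _ two_ne_zero) (by omega)]
    simp [Nat.Prime.factorization_pow, Nat.prime_two,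
      Nat.factorization_eq_zero_of_not_dvd (by omega : ¬ 2 ∣ 2 * r + 1)]
  have h2 : (2 ^ l * (2 * s + 1)).factorization 2 = l := by
    rw [Nat.factorization_mul (pow_ne_zero _ two_ne_zero) (by omega)]
    simp [Nat.Prime.factorization_pow, Nat.prime_two,
      Nat.factorization_eq_zero_of_not_dvd (by omega : ¬ 2 ∣ 2 * s + 1)]
  rw [← h1, h, h2]

private lemma Dset_disjoint {i l : ℕ} {x : ℝ} (hi : x ∈ Dset i) (hl : x ∈ Dset l) :
    i = l := by
  obtain ⟨c, hc, r, rfl⟩ := hi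
  obtain ⟨c', hc', s, he⟩ := hl
  set m := 2 ^ i * (2 * r + 1) with hm
  set m' := 2 ^ l * (2 * s + 1) with hm'
  have hpow : (0:ℝ) < 2 ^ m := by positivity
  have hpow' : (0:ℝ) < 2 ^ m' := by positivity
  have hZ : c * 2 ^ m' = c' * 2 ^ m := by
    have hr : (c : ℝ) * 2 ^ m' = (c' : ℝ) * 2 ^ m := (div_eq_div_iff hpow.ne' hpow'.ne').mp he
    exact_mod_cast hr
  have key : ∀ (a b : ℕ) (d d' : ℤ), Odd d → Odd d' → d * 2 ^ b = d' * 2 ^ a → a < b → False := by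
    intro a b d d' hd hd' hE hab
    have h2 : (2:ℤ) ^ b = 2 ^ (b - a) * 2 ^ a := by rw [← pow_add]; congr 1; omega
    rw [h2, ← mul_assoc] at hE
    have h3 : d * 2 ^ (b - a) = d' := mul_right_cancel₀ (by positivity) hE
    have hdvd : (2:ℤ) ∣ d' := by
      rw [← h3, show b - a = (b - a - 1) + 1 by omega, pow_succ, ← mul_assoc]
      exact ⟨d * 2 ^ (b - a - 1), mul_comm _ _⟩
    obtain ⟨w, hw⟩ := hd'
    obtain ⟨z, hz⟩ := hdvd
    omega
  have hmm : m = m' := by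
    rcases lt_trichotomy m m' with h | h | h
    · exact absurd (key m m' c c' hc hc' hZ h) not_false
    · exact h
    · exact absurd (key m' m c' c hc' hc hZ.symm h) not_false
  exact two_pow_mul_odd_inj (hm ▸ hm' ▸ hmm)

private lemma exists_mem_Dset_between (i : ℕ) {a b : ℝ} (hab : a < b) :
    ∃ x, x ∈ Dset i ∧ a < x ∧ x < b := by
  obtain ⟨r, hr⟩ := exists_nat_gt (4 / (b - a))
  set m := 2 ^ i * (2 * r + 1) with hm
  have hrm : r ≤ m := by
    have h1 : 2 * r + 1 ≤ m := Nat.le_mul_of_pos_left _ (pow_pos two_pos i)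
    omega
  have hmlt : (m : ℝ) < 2 ^ m := by exact_mod_cast (Nat.lt_two_pow_self (n := m))
  have hba : (0:ℝ) < b - a := by linarith
  have h2m : (0:ℝ) < 2 ^ m := by positivity
  have hb4 : 4 < (b - a) * 2 ^ m := by
    have hch : 4 / (b - a) < 2 ^ m := by
      calc 4 / (b - a) < r := hr
        _ ≤ m := by exact_mod_cast hrm
        _ < 2 ^ m := hmlt
    calc (4:ℝ) = 4 / (b - a) * (b - a) := by field_simp
      _ < 2 ^ m * (b - a) := mul_lt_mul_of_pos_right hch hba
      _ = (b - a) * 2 ^ m := mul_comm _ _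
  set z : ℤ := ⌊a * 2 ^ m⌋ + 1 with hz
  have hz1 : a * 2 ^ m < (z : ℝ) := by
    rw [hz]
    push_cast
    linarith [Int.lt_floor_add_one (a * 2 ^ m)]
  have hz2 : (z : ℝ) ≤ a * 2 ^ m + 1 := by
    rw [hz]
    push_cast
    linarith [Int.floor_le (a * 2 ^ m)]
  set c : ℤ := if Odd z then z else z + 1 with hc
  have hcodd : Odd c := by
    by_cases h : Odd z
    · rw [hc, if_pos h]; exact h
    · rw [hc, if_neg h]
      exact (Int.not_odd_iff_even.mp h).add_one
  have hc1 : a * 2 ^ m < (c : ℝ) := by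
    rw [hc]; split_ifs
    · exact hz1
    · push_cast; linarith
  have hcz : (c : ℝ) ≤ (z : ℝ) + 1 := by
    rw [hc]; split_ifs <;> push_cast <;> linarith
  have hc2 : (c : ℝ) < b * 2 ^ m := by nlinarith
  refine ⟨(c : ℝ) / 2 ^ m, ⟨c, hcodd, r, rfl⟩, ?_, ?_⟩
  · rw [lt_div_iff₀ h2m]; exact hc1
  · rw [div_lt_iff₀ h2m]; exact hc2

private lemma sum_antitone_le (g : ℕ → ℝ) (hg : ∀ a b : ℕ, a ≤ b → g b ≤ g a) :
    ∀ (m : ℕ) (T : Finset ℕ), T.card = m → ∑ j ∈ T, g j ≤ ∑ j ∈ Finset.range m, g j := by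
  intro m
  induction m with
  | zero => intro T hT; simp [Finset.card_eq_zero.mp hT]
  | succ m ih =>
    intro T hT
    have hne : T.Nonempty := Finset.card_pos.mp (by omega)
    have hMT : T.max' hne ∈ T := T.max'_mem hne
    have hsub : T ⊆ Finset.range (T.max' hne + 1) := fun x hx =>
      Finset.mem_range.mpr (Nat.lt_succ_of_le (T.le_max' x hx))
    have hcard : m ≤ T.max' hne := by
      have := Finset.card_le_card hsub
      rw [Finset.card_range] at this
      omega
    have herase : (T.erase (T.max' hne)).card = m := by
      rw [Finset.card_erase_of_mem hMT, hT]
      omega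
    calc ∑ j ∈ T, g j = g (T.max' hne) + ∑ j ∈ T.erase (T.max' hne), g j :=
          (Finset.add_sum_erase _ g hMT).symm
      _ ≤ g m + ∑ j ∈ Finset.range m, g j := add_le_add (hg m _ hcard) (ih _ herase)
      _ = ∑ j ∈ Finset.range (m + 1), g j := by rw [Finset.sum_range_succ]; ring


/-- Necessity in Theorem 1.8: if `limsup_n max_{1≤k≤δₙ} k^(1/qₙ) Φ_k⁻¹(1) = ∞`, then there
is a function `f` on `[0,1]` of `Φ`-bounded variation which does not belong to
`BV^(qₙ↑q)`. -/
theorem schramm_embedding_necessity (φ : ℕ → ℝ → ℝ)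
    (hmono : ∀ j, MonotoneOn (φ j) (Set.Ici 0))
    (hconv : ∀ j, ConvexOn ℝ (Set.Ici 0) (φ j))
    (hzero : ∀ j, φ j 0 = 0)
    (hord : ∀ j, ∀ x : ℝ, 0 < x → 0 < φ (j + 1) x ∧ φ (j + 1) x ≤ φ j x)
    (hdivg : ∀ x : ℝ, 0 < x →
      Tendsto (fun k => ∑ j ∈ range k, φ j x) atTop atTop)
    (hstrict : ∀ k : ℕ, 1 ≤ k →
      StrictMonoOn (fun x => ∑ j ∈ range k, φ j x) (Set.Ici 0))
    (inv : ℕ → ℝ)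
    (hinv : ∀ k : ℕ, 1 ≤ k → 0 ≤ inv k ∧ ∑ j ∈ range k, φ j (inv k) = 1)
    (qs : ℕ → ℝ) (hqs1 : ∀ n, 1 ≤ qs n) (hqsmono : Monotone qs)
    (δ : ℕ → ℝ) (hδ2 : ∀ n, 2 ≤ δ n) (hδmono : Monotone δ) (hδdiv : Tendsto δ atTop atTop)
    (hlimsup : ∀ M : ℝ, ∃ᶠ n in atTop, ∃ k : ℕ, 1 ≤ k ∧ (k : ℝ) ≤ δ n ∧
      M < (k : ℝ) ^ (1 / qs n) * inv k) :
    ∃ f : ℝ → ℝ,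
      (∃ V : ℝ, ∀ (s : ℕ) (u v : Fin s → ℝ),
        (∀ j, 0 ≤ u j ∧ u j < v j ∧ v j ≤ 1) →
        (∀ i j, i ≠ j → Set.Ioo (u i) (v i) ∩ Set.Ioo (u j) (v j) = ∅) →
        ∑ j, φ j.1 |f (v j) - f (u j)| ≤ V) ∧
      ¬ (∃ W : ℝ, ∀ (n : ℕ) (s : ℕ) (u v : Fin s → ℝ),
        (∀ j, 0 ≤ u j ∧ u j < v j ∧ v j ≤ 1) →
        (∀ i j, i ≠ j → Set.Ioo (u i) (v i) ∩ Set.Ioo (u j) (v j) = ∅) →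
        (∀ j, 1 / δ n ≤ v j - u j) →
        (∑ j, |f (v j) - f (u j)| ^ (qs n)) ^ (1 / qs n) ≤ W) := by
  classical
  -- basic facts about φ
  have hφ0 : ∀ (j : ℕ) (x : ℝ), 0 ≤ x → 0 ≤ φ j x := by
    intro j x hx
    have := hmono j (Set.mem_Ici.mpr le_rfl) (Set.mem_Ici.mpr hx) hx
    rwa [hzero j] at this
  have hφstep : ∀ (j : ℕ) (x : ℝ), 0 ≤ x → φ (j + 1) x ≤ φ j x := by
    intro j x hx
    rcases eq_or_lt_of_le hx with h | h
    · rw [← h, hzero, hzero]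
    · exact (hord j x h).2
  have hφdec : ∀ a b : ℕ, a ≤ b → ∀ x : ℝ, 0 ≤ x → φ b x ≤ φ a x := by
    intro a b hab x hx
    induction hab with
    | refl => exact le_rfl
    | step _ ih => exact le_trans (hφstep _ x hx) ih
  have hφscale : ∀ (j : ℕ) (c x : ℝ), 0 ≤ c → c ≤ 1 → 0 ≤ x →
      φ j (c * x) ≤ c * φ j x := by
    intro j c x hc hc1 hx
    have h := (hconv j).2 (Set.mem_Ici.mpr hx) (Set.mem_Ici.mpr (le_refl (0:ℝ))) hc
      (by linarith : (0:ℝ) ≤ 1 - c) (by ring)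
    simpa [hzero j, smul_eq_mul] using h
  have hinvpos : ∀ m : ℕ, 1 ≤ m → 0 < inv m := by
    intro m hm
    rcases lt_or_eq_of_le (hinv m hm).1 with h | h
    · exact h
    · exfalso
      have h2 := (hinv m hm).2
      rw [← h] at h2
      simp [hzero] at h2
  -- choose the stages
  have hstage : ∀ i : ℕ, ∃ nn kk : ℕ, 1 ≤ kk ∧ (kk : ℝ) ≤ δ nn ∧
      ((i : ℝ) + 1) * 2 ^ (i + 3) < (kk : ℝ) ^ (1 / qs nn) * inv kk := by
    intro i
    obtain ⟨nn, kk, h1, h2, h3⟩ := (hlimsup (((i : ℝ) + 1) * 2 ^ (i + 3))).exists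
    exact ⟨nn, kk, h1, h2, h3⟩
  choose nn kk hk1 hkδ hM using hstage
  have hδpos : ∀ m, (0:ℝ) < δ m := fun m => lt_of_lt_of_le (by norm_num) (hδ2 m)
  set t : ℕ → ℝ := fun i => 1 / δ (nn i) with htdef
  have ht0 : ∀ i, 0 < t i := fun i => by
    rw [htdef]; exact one_div_pos.mpr (hδpos (nn i))
  have ht2 : ∀ i, t i ≤ 1 / 2 := fun i => by
    rw [htdef]
    exact one_div_le_one_div_of_le (by norm_num) (hδ2 (nn i))
  have hkt : ∀ i, (kk i : ℝ) * t i ≤ 1 := by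
    intro i
    rw [htdef]
    dsimp only
    rw [mul_one_div, div_le_one (hδpos (nn i))]
    exact hkδ i
  set k' : ℕ → ℕ := fun i => max 1 (kk i / 2) with hk'def
  have hk'facts : ∀ i, 1 ≤ k' i ∧ k' i ≤ kk i ∧ kk i ≤ 4 * k' i := by
    intro i
    have h1 := hk1 i
    have h2 := Nat.div_add_mod (kk i) 2
    have h3 : kk i % 2 < 2 := Nat.mod_lt _ (by norm_num)
    rcases le_or_gt (kk i) 1 with h | h
    · have hkk1 : kk i = 1 := le_antisymm h h1
      have : k' i = 1 := by rw [hk'def]; simp [hkk1]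
      omega
    · have hd : 1 ≤ kk i / 2 := (Nat.one_le_div_iff (by norm_num)).mpr h
      have hmax : k' i = kk i / 2 := by rw [hk'def]; exact max_eq_right hd
      omega
  -- choose the points
  have hexu : ∀ i j : ℕ, ∃ x : ℝ, Irrational x ∧
      2 * (j : ℝ) * t i < x ∧ x < 2 * (j : ℝ) * t i + t i / 4 := by
    intro i j
    have hlt : 2 * (j : ℝ) * t i < 2 * (j : ℝ) * t i + t i / 4 := by
      have := ht0 i; linarith
    obtain ⟨x, hx1, hx2⟩ := dense_irrational.exists_mem_open isOpen_Ioo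
      (Set.nonempty_Ioo.mpr hlt)
    exact ⟨x, hx1, hx2.1, hx2.2⟩
  have hexv : ∀ i j : ℕ, ∃ x : ℝ, x ∈ Dset i ∧
      (2 * (j : ℝ) + 1) * t i + t i / 4 < x ∧ x < (2 * (j : ℝ) + 1) * t i + t i / 2 := by
    intro i j
    apply exists_mem_Dset_between
    have := ht0 i; linarith
  choose uu huI hu1 hu2 using hexu
  choose vv hvD hv1 hv2 using hexv
  have hulv : ∀ i j : ℕ, uu i j < vv i j := by
    intro i j
    have h1 := hu2 i j
    have h2 := hv1 i j
    have h3 := ht0 i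
    have h4 : (0:ℝ) ≤ (j : ℝ) := Nat.cast_nonneg j
    nlinarith
  have hord2 : ∀ i j j' : ℕ, j < j' → vv i j < uu i j' := by
    intro i j j' hjj
    have h1 := hv2 i j
    have h2 := hu1 i j'
    have h3 := ht0 i
    have hc : ((j : ℝ) + 1) ≤ (j' : ℝ) := by exact_mod_cast hjj
    nlinarith
  have hvmono : ∀ i j j' : ℕ, j < j' → vv i j < vv i j' := fun i j j' h =>
    lt_trans (hord2 i j j' h) (hulv i j')
  set A : ℕ → Finset ℝ := fun i => (Finset.range (k' i)).image (vv i) with hAdef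
  have hAmem : ∀ i x, x ∈ A i → ∃ j < k' i, vv i j = x := by
    intro i x hx
    rw [hAdef] at hx
    obtain ⟨j, hj, hjx⟩ := Finset.mem_image.mp hx
    exact ⟨j, Finset.mem_range.mp hj, hjx⟩
  have hAD : ∀ i x, x ∈ A i → x ∈ Dset i := by
    intro i x hx
    obtain ⟨j, _, hjx⟩ := hAmem i x hx
    rw [← hjx]
    exact hvD i j
  have hAdisj : ∀ i l x, x ∈ A i → x ∈ A l → i = l := fun i l x hi hl =>
    Dset_disjoint (hAD i x hi) (hAD l x hl)
  have hAcard : ∀ i, (A i).card = k' i := by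
    intro i
    rw [hAdef]
    dsimp only
    rw [Finset.card_image_of_injOn, Finset.card_range]
    intro a ha b hb hab
    rcases lt_trichotomy a b with h | h | h
    · exact absurd hab (ne_of_lt (hvmono i a b h))
    · exact h
    · exact absurd hab.symm (ne_of_lt (hvmono i b a h))
  set hgt : ℕ → ℝ := fun i => (1/2) ^ (i + 1) * inv (kk i) with hgtdef
  have hgtpos : ∀ i, 0 < hgt i := by
    intro i
    rw [hgtdef]
    have := hinvpos (kk i) (hk1 i)
    positivity
  set f : ℝ → ℝ := fun x => if hx : ∃ i, x ∈ A i then hgt (Nat.find hx) else 0 with hfdef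
  have hfA : ∀ i x, x ∈ A i → f x = hgt i := by
    intro i x hx
    have hex : ∃ l, x ∈ A l := ⟨i, hx⟩
    have hfind : Nat.find hex = i := hAdisj _ _ _ (Nat.find_spec hex) hx
    rw [hfdef]
    dsimp only
    rw [dif_pos hex, hfind]
  have hf0 : ∀ x, (¬ ∃ i, x ∈ A i) → f x = 0 := by
    intro x hx
    rw [hfdef]
    dsimp only
    rw [dif_neg hx]
  have hfnonneg : ∀ x, 0 ≤ f x := by
    intro x
    rw [hfdef]
    dsimp only
    split_ifs
    · exact (hgtpos _).le
    · exact le_rfl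
  refine ⟨f, ⟨2, ?_⟩, ?_⟩
  · -- Schramm bounded variation: V = 2
    intro s ucfg vcfg hb hdis
    have huinj : ∀ j j' : Fin s, ucfg j = ucfg j' → j = j' := by
      intro j j' he
      by_contra hne
      have hd := hdis j j' hne
      have h1 := (hb j).2.1
      have h2 := (hb j').2.1
      have hlt : ucfg j < min (vcfg j) (vcfg j') := lt_min h1 (by rw [he]; exact h2)
      have hx1 : ucfg j < (ucfg j + min (vcfg j) (vcfg j')) / 2 := by linarith
      have hx2 : (ucfg j + min (vcfg j) (vcfg j')) / 2 < min (vcfg j) (vcfg j') := by linarith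
      have hmem : (ucfg j + min (vcfg j) (vcfg j')) / 2 ∈
          Set.Ioo (ucfg j) (vcfg j) ∩ Set.Ioo (ucfg j') (vcfg j') := by
        refine ⟨⟨hx1, lt_of_lt_of_le hx2 (min_le_left _ _)⟩,
          ⟨?_, lt_of_lt_of_le hx2 (min_le_right _ _)⟩⟩
        rw [← he]; exact hx1
      rw [hd] at hmem
      exact hmem
    have hvinj : ∀ j j' : Fin s, vcfg j = vcfg j' → j = j' := by
      intro j j' he
      by_contra hne
      have hd := hdis j j' hne
      have h1 := (hb j).2.1
      have h2 := (hb j').2.1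
      have hlt : max (ucfg j) (ucfg j') < vcfg j := max_lt h1 (by rw [he]; exact h2)
      have hx1 : max (ucfg j) (ucfg j') < (max (ucfg j) (ucfg j') + vcfg j) / 2 := by linarith
      have hx2 : (max (ucfg j) (ucfg j') + vcfg j) / 2 < vcfg j := by linarith
      have hmem : (max (ucfg j) (ucfg j') + vcfg j) / 2 ∈
          Set.Ioo (ucfg j) (vcfg j) ∩ Set.Ioo (ucfg j') (vcfg j') := by
        refine ⟨⟨lt_of_le_of_lt (le_max_left _ _) hx1, hx2⟩,
          ⟨lt_of_le_of_lt (le_max_right _ _) hx1, ?_⟩⟩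
        rw [← he]; exact hx2
      rw [hd] at hmem
      exact hmem
    have habs : ∀ j : Fin s, |f (vcfg j) - f (ucfg j)| ≤ max (f (ucfg j)) (f (vcfg j)) := by
      intro j
      rcases le_total (f (vcfg j)) (f (ucfg j)) with h | h
      · rw [abs_of_nonpos (by linarith)]
        have h1 := hfnonneg (vcfg j)
        have h2 := le_max_left (f (ucfg j)) (f (vcfg j))
        linarith
      · rw [abs_of_nonneg (by linarith)]
        have h1 := hfnonneg (ucfg j)
        have h2 := le_max_right (f (ucfg j)) (f (vcfg j))
        linarith
    have hstep1 : ∑ j : Fin s, φ j.1 |f (vcfg j) - f (ucfg j)| ≤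
        ∑ j : Fin s, φ j.1 (max (f (ucfg j)) (f (vcfg j))) := by
      apply Finset.sum_le_sum
      intro j _
      exact hmono j.1 (Set.mem_Ici.mpr (abs_nonneg _))
        (Set.mem_Ici.mpr (le_trans (hfnonneg _) (le_max_left _ _))) (habs j)
    set pt : Fin s → ℝ := fun j => if f (vcfg j) < f (ucfg j) then ucfg j else vcfg j
      with hptdef
    have hptval : ∀ j, f (pt j) = max (f (ucfg j)) (f (vcfg j)) := by
      intro j
      rw [hptdef]
      dsimp only
      split_ifs with h
      · exact (max_eq_left h.le).symm
      · exact (max_eq_right (not_lt.mp h)).symm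
    set lv : Fin s → ℕ := fun j => if hx : ∃ i, pt j ∈ A i then Nat.find hx else 0
      with hlvdef
    have hlvmem : ∀ j : Fin s, 0 < f (pt j) → pt j ∈ A (lv j) ∧ f (pt j) = hgt (lv j) := by
      intro j hj
      have hex : ∃ i, pt j ∈ A i := by
        by_contra hno
        rw [hf0 _ hno] at hj
        exact lt_irrefl _ hj
      have h1 : pt j ∈ A (lv j) := by
        rw [hlvdef]
        dsimp only
        rw [dif_pos hex]
        exact Nat.find_spec hex
      exact ⟨h1, hfA _ _ h1⟩
    set T : Finset (Fin s) := Finset.univ.filter (fun j => 0 < f (pt j)) with hTdef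
    have hsplit : ∑ j : Fin s, φ j.1 (max (f (ucfg j)) (f (vcfg j))) =
        ∑ j ∈ T, φ j.1 (f (pt j)) := by
      rw [← Finset.sum_filter_add_sum_filter_not Finset.univ (fun j => 0 < f (pt j))
        (fun j => φ j.1 (max (f (ucfg j)) (f (vcfg j))))]
      have hz : ∑ j ∈ Finset.univ.filter (fun j => ¬ 0 < f (pt j)),
          φ j.1 (max (f (ucfg j)) (f (vcfg j))) = 0 := by
        apply Finset.sum_eq_zero
        intro j hj
        have h0 : f (pt j) = 0 :=
          le_antisymm (not_lt.mp (Finset.mem_filter.mp hj).2) (hfnonneg _)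
        rw [← hptval j, h0]
        exact hzero j.1
      rw [hz, add_zero, hTdef]
      apply Finset.sum_congr rfl
      intro j hj
      rw [hptval j]
    have hfiber : ∑ j ∈ T, φ j.1 (f (pt j)) =
        ∑ i ∈ T.image lv, ∑ j ∈ T.filter (fun j => lv j = i), φ j.1 (f (pt j)) :=
      (Finset.sum_fiberwise_of_maps_to (fun j hj => Finset.mem_image_of_mem lv hj) _).symm
    have hinner : ∀ i ∈ T.image lv,
        ∑ j ∈ T.filter (fun j => lv j = i), φ j.1 (f (pt j)) ≤ (1/2 : ℝ) ^ i := by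
      intro i _
      set S := T.filter (fun j => lv j = i) with hSdef
      have hSmem : ∀ j ∈ S, pt j ∈ A i ∧ f (pt j) = hgt i := by
        intro j hj
        obtain ⟨hjT, hji⟩ := Finset.mem_filter.mp hj
        have hpos : 0 < f (pt j) := (Finset.mem_filter.mp hjT).2
        obtain ⟨hmem, hval⟩ := hlvmem j hpos
        rw [hji] at hmem hval
        exact ⟨hmem, hval⟩
      have hre : ∑ j ∈ S, φ j.1 (f (pt j)) =
          ∑ m ∈ S.image (fun j : Fin s => j.1), φ m (hgt i) := by
        rw [Finset.sum_image (fun x _ y _ h => Fin.val_injective h)]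
        exact Finset.sum_congr rfl (fun j hj => by rw [(hSmem j hj).2])
      have hcard : (S.image (fun j : Fin s => j.1)).card ≤ 2 * kk i := by
        rw [Finset.card_image_of_injOn Fin.val_injective.injOn]
        have hmapsu : ∀ j ∈ S.filter (fun j => f (vcfg j) < f (ucfg j)), ucfg j ∈ A i := by
          intro j hj
          obtain ⟨hjS, hcond⟩ := Finset.mem_filter.mp hj
          have h := (hSmem j hjS).1
          rw [hptdef] at h
          dsimp only at h
          rw [if_pos hcond] at h
          exact h
        have hmapsv : ∀ j ∈ S.filter (fun j => ¬ f (vcfg j) < f (ucfg j)),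
            vcfg j ∈ A i := by
          intro j hj
          obtain ⟨hjS, hcond⟩ := Finset.mem_filter.mp hj
          have h := (hSmem j hjS).1
          rw [hptdef] at h
          dsimp only at h
          rw [if_neg hcond] at h
          exact h
        have hu' : (S.filter (fun j => f (vcfg j) < f (ucfg j))).card ≤ (A i).card :=
          Finset.card_le_card_of_injOn ucfg hmapsu (fun a _ b _ h => huinj a b h)
        have hv' : (S.filter (fun j => ¬ f (vcfg j) < f (ucfg j))).card ≤ (A i).card :=
          Finset.card_le_card_of_injOn vcfg hmapsv (fun a _ b _ h => hvinj a b h)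
        have hsum' := Finset.card_filter_add_card_filter_not
          (s := S) (p := fun j => f (vcfg j) < f (ucfg j))
        have hAc := hAcard i
        have hkk' := (hk'facts i).2.1
        omega
      have hsc : ∑ m ∈ Finset.range (kk i), φ m (hgt i) ≤ (1/2 : ℝ) ^ (i + 1) := by
        have hterm : ∀ m ∈ Finset.range (kk i),
            φ m (hgt i) ≤ (1/2 : ℝ) ^ (i + 1) * φ m (inv (kk i)) := by
          intro m _
          have := hφscale m ((1/2 : ℝ) ^ (i + 1)) (inv (kk i)) (by positivity)
            (pow_le_one₀ (by norm_num) (by norm_num)) (hinvpos (kk i) (hk1 i)).le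
          rw [hgtdef]
          exact this
        calc ∑ m ∈ Finset.range (kk i), φ m (hgt i)
            ≤ ∑ m ∈ Finset.range (kk i), (1/2 : ℝ) ^ (i + 1) * φ m (inv (kk i)) :=
              Finset.sum_le_sum hterm
          _ = (1/2 : ℝ) ^ (i + 1) * ∑ m ∈ Finset.range (kk i), φ m (inv (kk i)) :=
              (Finset.mul_sum _ _ _).symm
          _ = (1/2 : ℝ) ^ (i + 1) := by rw [(hinv (kk i) (hk1 i)).2, mul_one]
      rw [hre]
      calc ∑ m ∈ S.image (fun j : Fin s => j.1), φ m (hgt i)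
          ≤ ∑ m ∈ Finset.range ((S.image (fun j : Fin s => j.1)).card), φ m (hgt i) :=
            sum_antitone_le _ (fun a b hab => hφdec a b hab _ (hgtpos i).le) _ _ rfl
        _ ≤ ∑ m ∈ Finset.range (2 * kk i), φ m (hgt i) :=
            Finset.sum_le_sum_of_subset_of_nonneg (Finset.range_subset_range.mpr hcard)
              (fun m _ _ => hφ0 m _ (hgtpos i).le)
        _ ≤ 2 * ∑ m ∈ Finset.range (kk i), φ m (hgt i) := by
            have e : ∑ m ∈ Finset.range (2 * kk i), φ m (hgt i) =
                ∑ m ∈ Finset.range (kk i), φ m (hgt i) +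
                ∑ m ∈ Finset.range (kk i), φ (kk i + m) (hgt i) := by
              rw [two_mul, Finset.sum_range_add]
            rw [e, two_mul]
            apply add_le_add le_rfl
            exact Finset.sum_le_sum fun m _ =>
              hφdec m (kk i + m) (Nat.le_add_left m (kk i)) _ (hgtpos i).le
        _ ≤ 2 * (1/2 : ℝ) ^ (i + 1) := by linarith
        _ = (1/2 : ℝ) ^ i := by rw [pow_succ]; ring
    calc ∑ j : Fin s, φ j.1 |f (vcfg j) - f (ucfg j)|
        ≤ ∑ j : Fin s, φ j.1 (max (f (ucfg j)) (f (vcfg j))) := hstep1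
      _ = ∑ j ∈ T, φ j.1 (f (pt j)) := hsplit
      _ = ∑ i ∈ T.image lv, ∑ j ∈ T.filter (fun j => lv j = i), φ j.1 (f (pt j)) := hfiber
      _ ≤ ∑ i ∈ T.image lv, (1/2 : ℝ) ^ i := Finset.sum_le_sum hinner
      _ ≤ ∑ i ∈ Finset.range ((T.image lv).card), (1/2 : ℝ) ^ i :=
          sum_antitone_le _ (fun a b hab =>
            pow_le_pow_of_le_one (by norm_num) (by norm_num) hab) _ _ rfl
      _ ≤ 2 := sum_geometric_two_le _
  · -- not in BV^(qn↑q)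
    rintro ⟨W, hW⟩
    set i0 := ⌈W⌉₊ with hi0def
    have hq1 : 1 ≤ qs (nn i0) := hqs1 (nn i0)
    have hq0 : (0:ℝ) < qs (nn i0) := by linarith
    have hk'1 : 1 ≤ k' i0 := (hk'facts i0).1
    -- the test configuration
    have hvle1 : ∀ j : ℕ, j < k' i0 → vv i0 j ≤ 1 := by
      intro j hj
      have h2 := hv2 i0 j
      have h3 := ht0 i0
      have h4 := ht2 i0
      rcases eq_or_lt_of_le (hk1 i0) with hk | hk
      · have hkk1 : kk i0 = 1 := hk.symm
        have hkone : k' i0 = 1 := by rw [hk'def]; simp [hkk1]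
        have hj0 : j = 0 := by omega
        subst hj0
        push_cast at h2
        linarith
      · have hd : 1 ≤ kk i0 / 2 := (Nat.one_le_div_iff (by norm_num)).mpr hk
        have hmax : k' i0 = kk i0 / 2 := by rw [hk'def]; exact max_eq_right hd
        have hdm := Nat.div_add_mod (kk i0) 2
        have hjk : 2 * j + 2 ≤ kk i0 := by omega
        have hjkR : 2 * (j:ℝ) + 2 ≤ (kk i0 : ℝ) := by exact_mod_cast hjk
        have hkt0 := hkt i0
        nlinarith [mul_nonneg (sub_nonneg.mpr hjkR) h3.le]
    have hbounds : ∀ j : Fin (k' i0), 0 ≤ uu i0 j.1 ∧ uu i0 j.1 < vv i0 j.1 ∧ vv i0 j.1 ≤ 1 := by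
      intro j
      refine ⟨?_, hulv i0 j.1, hvle1 j.1 j.2⟩
      have h1 := hu1 i0 j.1
      have h3 := ht0 i0
      have h4 : (0:ℝ) ≤ (j.1 : ℝ) := Nat.cast_nonneg _
      nlinarith
    have hdisj : ∀ a b : Fin (k' i0), a ≠ b →
        Set.Ioo (uu i0 a.1) (vv i0 a.1) ∩ Set.Ioo (uu i0 b.1) (vv i0 b.1) = ∅ := by
      have key : ∀ p q : Fin (k' i0), p.1 < q.1 →
          Set.Ioo (uu i0 p.1) (vv i0 p.1) ∩ Set.Ioo (uu i0 q.1) (vv i0 q.1) = ∅ := by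
        intro p q hpq
        apply Set.eq_empty_iff_forall_notMem.mpr
        rintro x ⟨⟨_, hx2⟩, ⟨hx3, _⟩⟩
        have := hord2 i0 p.1 q.1 hpq
        linarith
      intro a b hne
      rcases lt_or_gt_of_ne (fun h => hne (Fin.val_injective h)) with h | h
      · exact key a b h
      · rw [Set.inter_comm]; exact key b a h
    have hlen : ∀ j : Fin (k' i0), 1 / δ (nn i0) ≤ vv i0 j.1 - uu i0 j.1 := by
      intro j
      have h1 := hu2 i0 j.1
      have h2 := hv1 i0 j.1
      have h3 := ht0 i0
      have ht : t i0 = 1 / δ (nn i0) := by rw [htdef]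
      rw [← ht]
      nlinarith
    have hval : (∑ j : Fin (k' i0), |f (vv i0 j.1) - f (uu i0 j.1)| ^ (qs (nn i0)))
        ^ (1 / qs (nn i0)) ≤ W :=
      hW (nn i0) (k' i0) (fun j => uu i0 j.1) (fun j => vv i0 j.1) hbounds hdisj hlen
    -- compute the sum
    have hfu : ∀ j : Fin (k' i0), f (uu i0 j.1) = 0 := by
      intro j
      apply hf0
      rintro ⟨l, hl⟩
      exact not_irrational_of_mem_Dset (hAD l _ hl) (huI i0 j.1)
    have hfv : ∀ j : Fin (k' i0), f (vv i0 j.1) = hgt i0 := by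
      intro j
      apply hfA
      rw [hAdef]
      exact Finset.mem_image_of_mem _ (Finset.mem_range.mpr j.2)
    have hsum : ∑ j : Fin (k' i0), |f (vv i0 j.1) - f (uu i0 j.1)| ^ (qs (nn i0)) =
        (k' i0 : ℝ) * (hgt i0) ^ (qs (nn i0)) := by
      have hterm : ∀ j : Fin (k' i0),
          |f (vv i0 j.1) - f (uu i0 j.1)| ^ (qs (nn i0)) = (hgt i0) ^ (qs (nn i0)) := by
        intro j
        rw [hfv j, hfu j, sub_zero, abs_of_pos (hgtpos i0)]
      rw [Finset.sum_congr rfl (fun j _ => hterm j), Finset.sum_const, Finset.card_univ,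
        Fintype.card_fin, nsmul_eq_mul]
    rw [hsum] at hval
    have e1 : ((k' i0 : ℝ) * (hgt i0) ^ (qs (nn i0))) ^ (1 / qs (nn i0)) =
        (k' i0 : ℝ) ^ (1 / qs (nn i0)) * hgt i0 := by
      rw [Real.mul_rpow (Nat.cast_nonneg _) (Real.rpow_nonneg (hgtpos i0).le _)]
      congr 1
      rw [← Real.rpow_mul (hgtpos i0).le, mul_one_div_cancel hq0.ne', Real.rpow_one]
    rw [e1] at hval
    -- lower bound on the value
    have hk4 : (kk i0 : ℝ) / 4 ≤ (k' i0 : ℝ) := by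
      have := (hk'facts i0).2.2
      have hc : (kk i0 : ℝ) ≤ 4 * (k' i0 : ℝ) := by exact_mod_cast this
      linarith
    have e2 : ((kk i0 : ℝ) / 4) ^ (1 / qs (nn i0)) ≤ (k' i0 : ℝ) ^ (1 / qs (nn i0)) :=
      Real.rpow_le_rpow (by positivity) hk4 (by positivity)
    have e3 : ((kk i0 : ℝ) / 4) ^ (1 / qs (nn i0)) =
        (kk i0 : ℝ) ^ (1 / qs (nn i0)) / (4:ℝ) ^ (1 / qs (nn i0)) :=
      Real.div_rpow (Nat.cast_nonneg _) (by norm_num : (0:ℝ) ≤ 4) (1 / qs (nn i0))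
    have e4 : (4:ℝ) ^ (1 / qs (nn i0)) ≤ 4 := by
      have h := Real.rpow_le_rpow_of_exponent_le (by norm_num : (1:ℝ) ≤ 4)
        ((div_le_one hq0).mpr hq1)
      rwa [Real.rpow_one] at h
    have e5 : (kk i0 : ℝ) ^ (1 / qs (nn i0)) / 4 ≤
        (kk i0 : ℝ) ^ (1 / qs (nn i0)) / (4:ℝ) ^ (1 / qs (nn i0)) := by
      have h40 : (0:ℝ) < (4:ℝ) ^ (1 / qs (nn i0)) := Real.rpow_pos_of_pos (by norm_num) _
      have hnn : 0 ≤ (kk i0 : ℝ) ^ (1 / qs (nn i0)) := Real.rpow_nonneg (Nat.cast_nonneg _) _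
      rw [div_le_div_iff₀ (by norm_num) h40]
      nlinarith
    have h1 : (kk i0 : ℝ) ^ (1 / qs (nn i0)) / 4 ≤ (k' i0 : ℝ) ^ (1 / qs (nn i0)) :=
      le_trans (le_trans e5 (le_of_eq e3.symm)) e2
    have hpos4 : (0:ℝ) < (1/2 : ℝ) ^ (i0 + 1) / 4 := by positivity
    have hstep : ((i0 : ℝ) + 1) * 2 ^ (i0 + 3) * ((1/2 : ℝ) ^ (i0 + 1) / 4) <
        ((kk i0 : ℝ) ^ (1 / qs (nn i0)) * inv (kk i0)) * ((1/2 : ℝ) ^ (i0 + 1) / 4) :=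
      mul_lt_mul_of_pos_right (hM i0) hpos4
    have hc1 : (2:ℝ) ^ (i0 + 3) * ((1/2 : ℝ) ^ (i0 + 1) / 4) = 1 := by
      have h : (2:ℝ) ^ (i0 + 3) = 2 ^ (i0 + 1) * 4 := by
        rw [show i0 + 3 = (i0 + 1) + 2 by omega, pow_add]
        norm_num
      rw [h]
      have h2 : ((1:ℝ)/2) ^ (i0 + 1) = 1 / 2 ^ (i0 + 1) := by
        rw [div_pow, one_pow]
      rw [h2]
      field_simp
    have hlhs : ((i0 : ℝ) + 1) * 2 ^ (i0 + 3) * ((1/2 : ℝ) ^ (i0 + 1) / 4) = (i0 : ℝ) + 1 := by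
      rw [mul_assoc, hc1, mul_one]
    have hrhs : ((kk i0 : ℝ) ^ (1 / qs (nn i0)) * inv (kk i0)) * ((1/2 : ℝ) ^ (i0 + 1) / 4) ≤
        (k' i0 : ℝ) ^ (1 / qs (nn i0)) * hgt i0 := by
      have he : ((kk i0 : ℝ) ^ (1 / qs (nn i0)) * inv (kk i0)) * ((1/2 : ℝ) ^ (i0 + 1) / 4) =
          ((kk i0 : ℝ) ^ (1 / qs (nn i0)) / 4) * hgt i0 := by
        rw [hgtdef]
        ring
      rw [he]
      exact mul_le_mul_of_nonneg_right h1 (hgtpos i0).le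
    have hWi : W ≤ (i0 : ℝ) := by
      rw [hi0def]
      exact Nat.le_ceil W
    linarith
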